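/- Let c/d be an irreducible fraction with 0 < c/d < 1 and c/d ≠ 1/2, and let n be a positive integer. If (A,B) is a c/d-cross-intersecting pair of families of subsets of {1,...,n} with |A|·|B| = 2^n, then A = 2^{[n]} (all subsets of [n]) and B = {∅} or B = ∅ (B contains no nonempty set). -/

import Mathlib

open Finset Module Matrix

namespace MaxPairAux

/-- indicator vector of a finset -/
def ee (n : ℕ) (s : Finset (Fin n)) : Fin n → ℚ := fun i => if i ∈ s then 1 else 0

lemma ee_inj (n : ℕ) : Function.Injective (ee n) := by
  intro s t h
  ext i
  have := congrFun h i
  by_cases hs : i ∈ s <;> by_cases ht : i ∈ t <;> simp [ee, hs, ht] at this ⊢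

lemma ee_dot (n : ℕ) (s t : Finset (Fin n)) :
    ee n s ⬝ᵥ ee n t = ((s ∩ t).card : ℚ) := by
  rw [dotProduct]
  have h1 : ∀ i : Fin n, ee n s i * ee n t i = if i ∈ s ∩ t then (1:ℚ) else 0 := by
    intro i
    by_cases hs : i ∈ s <;> by_cases ht : i ∈ t <;> simp [ee, hs, ht]
  rw [Finset.sum_congr rfl fun i _ => h1 i]
  rw [Finset.sum_ite_mem, Finset.univ_inter, Finset.sum_const, nsmul_eq_mul, mul_one]

/-- main cardinality bound: a set of cube vertices with pairwise differences in a
subspace of rank ≤ k has at most 2^k elements. -/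
lemma lemA (n : ℕ) : ∀ (k : ℕ) (W : Submodule ℚ (Fin n → ℚ)) (S : Finset (Finset (Fin n))),
    Module.finrank ℚ W ≤ k → (∀ s ∈ S, ∀ t ∈ S, ee n s - ee n t ∈ W) → S.card ≤ 2 ^ k := by
  intro k
  induction k with
  | zero =>
    intro W S hrk hdiff
    refine le_trans (Finset.card_le_one.mpr ?_) (by norm_num)
    intro s hs t ht
    by_contra hne
    have hv : ee n s - ee n t ∈ W := hdiff s hs t ht
    have hv0 : ee n s - ee n t ≠ 0 := sub_ne_zero.mpr fun h => hne (ee_inj n h)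
    have hW : W ≠ ⊥ := by
      intro h
      rw [h, Submodule.mem_bot] at hv
      exact hv0 hv
    have : Module.finrank ℚ W ≠ 0 := by
      intro h0
      exact hW (Submodule.finrank_eq_zero.mp h0)
    omega
  | succ k ih =>
    intro W S hrk hdiff
    by_cases hone : ∀ s ∈ S, ∀ t ∈ S, s = t
    · refine le_trans (Finset.card_le_one.mpr hone) ?_
      exact Nat.one_le_two_pow
    · push_neg at hone
      obtain ⟨s, hs, t, ht, hne⟩ := hone
      have hv : ee n s - ee n t ∈ W := hdiff s hs t ht
      have hv0 : ee n s - ee n t ≠ 0 := sub_ne_zero.mpr fun h => hne (ee_inj n h)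
      obtain ⟨i, hi⟩ : ∃ i, (ee n s - ee n t) i ≠ 0 := Function.ne_iff.mp hv0
      classical
      set W' := W ⊓ LinearMap.ker (LinearMap.proj i : (Fin n → ℚ) →ₗ[ℚ] ℚ) with hW'
      have hlt : W' < W := by
        refine lt_of_le_of_ne inf_le_left ?_
        intro h
        have hmem : ee n s - ee n t ∈ W' := h ▸ hv
        have : (ee n s - ee n t) i = 0 := hmem.2
        exact hi this
      have hrk' : Module.finrank ℚ W' ≤ k := by
        have := Submodule.finrank_lt_finrank_of_lt hlt
        omega
      have key : ∀ (P : Fin n → Prop) [DecidablePred P],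
          (∀ s' ∈ S.filter (fun s' => P i ∧ i ∈ s' ∨ ¬ P i ∧ i ∉ s'), True) → True := fun _ _ _ => trivial
      -- split S by membership of i
      have hsplit : (S.filter (fun s' => i ∈ s')).card + (S.filter (fun s' => i ∉ s')).card = S.card := by
        exact Finset.card_filter_add_card_filter_not (fun s' => i ∈ s')
      have h1 : (S.filter (fun s' => i ∈ s')).card ≤ 2 ^ k := by
        refine ih W' _ hrk' ?_
        intro a ha b hb
        rw [Finset.mem_filter] at ha hb
        refine ⟨hdiff a ha.1 b hb.1, ?_⟩
        have : (ee n a - ee n b) i = 0 := by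
          simp [ee, ha.2, hb.2]
        exact this
      have h2 : (S.filter (fun s' => i ∉ s')).card ≤ 2 ^ k := by
        refine ih W' _ hrk' ?_
        intro a ha b hb
        rw [Finset.mem_filter] at ha hb
        refine ⟨hdiff a ha.1 b hb.1, ?_⟩
        have : (ee n a - ee n b) i = 0 := by
          simp [ee, ha.2, hb.2]
        exact this
      calc S.card = (S.filter (fun s' => i ∈ s')).card + (S.filter (fun s' => i ∉ s')).card := hsplit.symm
        _ ≤ 2 ^ k + 2 ^ k := Nat.add_le_add h1 h2
        _ = 2 ^ (k + 1) := by ring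

/-- the orthogonal complement of a subspace of ℚ^n w.r.t. the dot product -/
noncomputable def perp (n : ℕ) (W : Submodule ℚ (Fin n → ℚ)) : Submodule ℚ (Fin n → ℚ) :=
  (W.map (Pi.basisFun ℚ (Fin n)).toDualEquiv.toLinearMap).dualCoannihilator

lemma toDual_eq_dot (n : ℕ) (w x : Fin n → ℚ) :
    (Pi.basisFun ℚ (Fin n)).toDual w x = w ⬝ᵥ x := by
  conv_lhs => rw [← Basis.sum_repr (Pi.basisFun ℚ (Fin n)) x]
  rw [map_sum]
  have : ∀ i : Fin n, ((Pi.basisFun ℚ (Fin n)).toDual w)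
      ((Pi.basisFun ℚ (Fin n)).repr x i • (Pi.basisFun ℚ (Fin n)) i)
      = x i * w i := by
    intro i
    rw [_root_.map_smul]
    rw [Basis.toDual_apply_left]
    simp [Pi.basisFun_repr]
  rw [Finset.sum_congr rfl fun i _ => this i]
  rw [dotProduct]
  exact Finset.sum_congr rfl fun i _ => mul_comm _ _

lemma mem_perp (n : ℕ) (W : Submodule ℚ (Fin n → ℚ)) (x : Fin n → ℚ) :
    x ∈ perp n W ↔ ∀ w ∈ W, w ⬝ᵥ x = 0 := by
  rw [perp, Submodule.mem_dualCoannihilator]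
  constructor
  · intro h w hw
    have := h ((Pi.basisFun ℚ (Fin n)).toDualEquiv.toLinearMap w) ⟨w, hw, rfl⟩
    rwa [LinearEquiv.coe_coe, Basis.toDualEquiv_apply, toDual_eq_dot] at this
  · intro h φ hφ
    obtain ⟨w, hw, rfl⟩ := hφ
    rw [LinearEquiv.coe_coe, Basis.toDualEquiv_apply, toDual_eq_dot]
    exact h w hw

lemma finrank_perp (n : ℕ) (W : Submodule ℚ (Fin n → ℚ)) :
    Module.finrank ℚ W + Module.finrank ℚ (perp n W) = n := by
  have h1 := Subspace.finrank_add_finrank_dualCoannihilator_eq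
    (W.map (Pi.basisFun ℚ (Fin n)).toDualEquiv.toLinearMap)
  have h2 : Module.finrank ℚ (W.map (Pi.basisFun ℚ (Fin n)).toDualEquiv.toLinearMap)
      = Module.finrank ℚ W := LinearEquiv.finrank_map_eq _ _
  rw [h2] at h1
  rw [perp, h1]
  simp

end MaxPairAux

open MaxPairAux

theorem maximal_pair_trivial (n c d : ℕ) (hn : 0 < n) (hc : 0 < c) (hcd : c < d)
    (hcop : Nat.Coprime c d) (hhalf : 2 * c ≠ d)
    (A B : Finset (Finset (Fin n)))
    (hcross : ∀ a ∈ A, ∀ b ∈ B, d * (a ∩ b).card = c * b.card)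
    (hmax : A.card * B.card = 2 ^ n) :
    A = Finset.univ ∧ ∀ b ∈ B, b = ∅ := by
  classical
  have hd : 0 < d := hc.trans hcd
  have hApos : 0 < A.card := by
    rcases Nat.eq_zero_or_pos A.card with h | h
    · exfalso
      rw [h, zero_mul] at hmax
      have : 0 < 2 ^ n := by positivity
      omega
    · exact h
  have hBpos : 0 < B.card := by
    rcases Nat.eq_zero_or_pos B.card with h | h
    · exfalso
      rw [h, mul_zero] at hmax
      have : 0 < 2 ^ n := by positivity
      omega
    · exact h
  obtain ⟨a0, ha0⟩ := Finset.card_pos.mp hApos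
  -- the span of differences of A and the span of B
  set DA : Set (Fin n → ℚ) := {x | ∃ a ∈ A, ∃ a' ∈ A, x = ee n a - ee n a'} with hDA
  set WA : Submodule ℚ (Fin n → ℚ) := Submodule.span ℚ DA with hWA
  set WB : Submodule ℚ (Fin n → ℚ) := Submodule.span ℚ (ee n '' ↑B) with hWB
  set kA : ℕ := Module.finrank ℚ WA with hkA
  set kB : ℕ := Module.finrank ℚ WB with hkB
  have hdiffA : ∀ a ∈ A, ∀ a' ∈ A, ee n a - ee n a' ∈ WA := by
    intro a ha a' ha'
    exact Submodule.subset_span ⟨a, ha, a', ha', rfl⟩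
  have hmemB : ∀ b ∈ B, ee n b ∈ WB := by
    intro b hb
    exact Submodule.subset_span ⟨b, hb, rfl⟩
  have hdiffB : ∀ b ∈ B, ∀ b' ∈ B, ee n b - ee n b' ∈ WB := by
    intro b hb b' hb'
    exact Submodule.sub_mem _ (hmemB b hb) (hmemB b' hb')
  have hcardA : A.card ≤ 2 ^ kA := lemA n kA WA A le_rfl hdiffA
  have hcardB : B.card ≤ 2 ^ kB := lemA n kB WB B le_rfl hdiffB
  -- WB is contained in the perp of WA
  have hdotAB : ∀ w ∈ WA, ∀ b ∈ B, w ⬝ᵥ ee n b = 0 := by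
    intro w hw
    induction hw using Submodule.span_induction with
    | mem x hx =>
      obtain ⟨a, ha, a', ha', rfl⟩ := hx
      intro b hb
      rw [sub_dotProduct, ee_dot, ee_dot]
      have h1 := hcross a ha b hb
      have h2 := hcross a' ha' b hb
      have : (a ∩ b).card = (a' ∩ b).card := Nat.eq_of_mul_eq_mul_left hd (h1.trans h2.symm)
      rw [this, sub_self]
    | zero => intro b hb; rw [zero_dotProduct]
    | add x y hx hy ihx ihy =>
      intro b hb
      rw [add_dotProduct, ihx b hb, ihy b hb, add_zero]
    | smul r x hx ihx =>
      intro b hb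
      rw [smul_dotProduct, ihx b hb, smul_zero]
  have hWBperp : WB ≤ perp n WA := by
    rw [hWB, Submodule.span_le]
    rintro x ⟨b, hb, rfl⟩
    rw [SetLike.mem_coe, mem_perp]
    intro w hw
    exact hdotAB w hw b hb
  have hperp_rank : kA + Module.finrank ℚ (perp n WA) = n := finrank_perp n WA
  have hkBle : kB ≤ Module.finrank ℚ (perp n WA) := Submodule.finrank_mono hWBperp
  have hkk : kA + kB ≤ n := by omega
  -- squeeze all inequalities into equalities
  have e1 : 2 ^ n ≤ 2 ^ kA * B.card := by
    rw [← hmax]; exact Nat.mul_le_mul_right _ hcardA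
  have e2 : 2 ^ kA * B.card ≤ 2 ^ kA * 2 ^ kB := Nat.mul_le_mul_left _ hcardB
  have e3 : 2 ^ kA * 2 ^ kB ≤ 2 ^ n := by
    rw [← pow_add]
    exact Nat.pow_le_pow_right (by norm_num) hkk
  have h4 : 2 ^ kA * B.card = 2 ^ n := le_antisymm (e2.trans e3) e1
  have h5 : 2 ^ kA * 2 ^ kB = 2 ^ n := le_antisymm e3 (h4 ▸ e2)
  have hkkn : kA + kB = n := by
    have : (2:ℕ) ^ (kA + kB) = 2 ^ n := by rw [pow_add]; exact h5
    exact Nat.pow_right_injective (by norm_num) this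
  have hAcard : A.card = 2 ^ kA := by
    have : A.card * B.card = 2 ^ kA * B.card := by rw [hmax, h4]
    exact Nat.eq_of_mul_eq_mul_right hBpos this
  have hBcard : B.card = 2 ^ kB := by
    have : 2 ^ kA * B.card = 2 ^ kA * 2 ^ kB := by rw [h4, h5]
    exact Nat.eq_of_mul_eq_mul_left (by positivity) this
  have hWBeq : WB = perp n WA := by
    refine Submodule.eq_of_le_of_finrank_le hWBperp ?_
    omega
  -- Main claim: every member of B is empty
  have hBempty : ∀ b ∈ B, b = ∅ := by
    intro b0 hb0
    by_contra hne
    have hm : 0 < b0.card := Finset.card_pos.mpr (Finset.nonempty_iff_ne_empty.mpr hne)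
    set m := b0.card with hmm
    set t := (a0 ∩ b0).card with ht
    have hdt : d * t = c * m := hcross a0 ha0 b0 hb0
    have hconst : ∀ a ∈ A, (a ∩ b0).card = t := by
      intro a ha
      exact Nat.eq_of_mul_eq_mul_left hd ((hcross a ha b0 hb0).trans hdt.symm)
    by_cases hH : ∀ i ∈ b0, (A.filter (fun a => i ∈ a)).Nonempty ∧ (A.filter (fun a => i ∉ a)).Nonempty
    · -- every coordinate of b0 halves A; forces 2c = d
      exfalso
      have hhalfi : ∀ i ∈ b0, 2 * (A.filter (fun a => i ∈ a)).card = A.card := by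
        intro i hi
        obtain ⟨⟨a1, ha1⟩, ⟨a2, ha2⟩⟩ := hH i hi
        rw [Finset.mem_filter] at ha1 ha2
        -- the difference of a1 a2 has nonzero i coordinate
        have hvi : (ee n a1 - ee n a2) i ≠ 0 := by
          simp [ee, ha1.2, ha2.2]
        set W' := WA ⊓ LinearMap.ker (LinearMap.proj i : (Fin n → ℚ) →ₗ[ℚ] ℚ) with hW'
        have hlt : W' < WA := by
          refine lt_of_le_of_ne inf_le_left ?_
          intro h
          have hmem : ee n a1 - ee n a2 ∈ W' := h ▸ hdiffA a1 ha1.1 a2 ha2.1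
          exact hvi hmem.2
        have hrk' : Module.finrank ℚ W' < kA := Submodule.finrank_lt_finrank_of_lt hlt
        have hf1 : (A.filter (fun a => i ∈ a)).card ≤ 2 ^ (kA - 1) := by
          refine le_trans (lemA n (Module.finrank ℚ W') W' _ le_rfl ?_)
            (Nat.pow_le_pow_right (by norm_num) (by omega))
          intro a ha b hb
          rw [Finset.mem_filter] at ha hb
          exact ⟨hdiffA a ha.1 b hb.1, by simp [ee, ha.2, hb.2]⟩
        have hf2 : (A.filter (fun a => i ∉ a)).card ≤ 2 ^ (kA - 1) := by
          refine le_trans (lemA n (Module.finrank ℚ W') W' _ le_rfl ?_)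
            (Nat.pow_le_pow_right (by norm_num) (by omega))
          intro a ha b hb
          rw [Finset.mem_filter] at ha hb
          exact ⟨hdiffA a ha.1 b hb.1, by simp [ee, ha.2, hb.2]⟩
        have hsplit : (A.filter (fun a => i ∈ a)).card + (A.filter (fun a => i ∉ a)).card = A.card :=
          Finset.card_filter_add_card_filter_not (fun a => i ∈ a)
        have hpow : 2 ^ (kA - 1) * 2 = 2 ^ kA := by
          rw [← pow_succ]
          congr 1
          omega
        omega
      -- double counting
      have hsum : ∑ a ∈ A, (a ∩ b0).card = ∑ i ∈ b0, (A.filter (fun a => i ∈ a)).card := by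
        have hint : ∀ a : Finset (Fin n), (a ∩ b0).card = ∑ i ∈ b0, if i ∈ a then 1 else 0 := by
          intro a
          rw [← Finset.card_filter]
          congr 1
          ext j
          simp [Finset.mem_inter, Finset.mem_filter, and_comm]
        calc ∑ a ∈ A, (a ∩ b0).card = ∑ a ∈ A, ∑ i ∈ b0, if i ∈ a then 1 else 0 :=
              Finset.sum_congr rfl fun a _ => hint a
          _ = ∑ i ∈ b0, ∑ a ∈ A, if i ∈ a then 1 else 0 := Finset.sum_comm
          _ = ∑ i ∈ b0, (A.filter (fun a => i ∈ a)).card :=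
              Finset.sum_congr rfl fun i _ => (Finset.card_filter _ _).symm
      have hL : ∑ a ∈ A, (a ∩ b0).card = A.card * t := by
        rw [Finset.sum_congr rfl fun a ha => hconst a ha, Finset.sum_const, smul_eq_mul]
      have hR : 2 * ∑ i ∈ b0, (A.filter (fun a => i ∈ a)).card = m * A.card := by
        rw [Finset.mul_sum]
        rw [Finset.sum_congr rfl fun i hi => hhalfi i hi, Finset.sum_const, smul_eq_mul]
      have h2tm : 2 * t = m := by
        have h6 : 2 * (A.card * t) = m * A.card := by rw [← hL, hsum]; exact hR
        have h7 : A.card * (2 * t) = A.card * m := by ring_nf; ring_nf at h6; omega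
        exact Nat.eq_of_mul_eq_mul_left hApos h7
      -- now d * t = c * m = c * 2 * t with t > 0 gives d = 2c
      have htpos : 0 < t := by
        by_contra h
        push_neg at h
        interval_cases t
        · omega
      have : d * t = 2 * c * t := by rw [hdt, ← h2tm]; ring
      have : d = 2 * c := Nat.eq_of_mul_eq_mul_right htpos this
      omega
    · -- some coordinate i of b0 is constant over A
      push_neg at hH
      obtain ⟨i, hib0, hcase⟩ := hH
      -- in both cases, (ee n {i}) is orthogonal to WA
      have hconsti : ∀ a ∈ A, ∀ a' ∈ A, (ee n a) i = (ee n a') i := by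
        by_cases h1 : (A.filter (fun a => i ∈ a)).Nonempty
        · have h2 := hcase h1
          rw [Finset.filter_eq_empty_iff] at h2
          intro a ha a' ha'
          have ha2 := h2 ha
          have ha2' := h2 ha'
          push_neg at ha2 ha2'
          simp [ee, ha2, ha2']
        · rw [Finset.not_nonempty_iff_eq_empty, Finset.filter_eq_empty_iff] at h1
          intro a ha a' ha'
          simp [ee, h1 ha, h1 ha']
      have hdot_single : ∀ w : Fin n → ℚ, w ⬝ᵥ ee n {i} = w i := by
        intro w
        simp [dotProduct, ee, Finset.mem_singleton, mul_ite]
      have hiperp : ee n {i} ∈ perp n WA := by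
        rw [mem_perp]
        intro w hw
        rw [hdot_single]
        induction hw using Submodule.span_induction with
        | mem x hx =>
          obtain ⟨a, ha, a', ha', rfl⟩ := hx
          have h := hconsti a ha a' ha'
          simp only [Pi.sub_apply, h, sub_self]
        | zero => rfl
        | add x y hx hy ihx ihy => simp [Pi.add_apply, ihx, ihy]
        | smul r x hx ihx => simp [Pi.smul_apply, ihx]
      have hiWB : ee n {i} ∈ WB := by rw [hWBeq]; exact hiperp
      have hiB : ({i} : Finset (Fin n)) ∈ B := by
        by_contra hnotB
        have hS' : ∀ s ∈ insert ({i} : Finset (Fin n)) B, ee n s ∈ WB := by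
          intro s hs
          rcases Finset.mem_insert.mp hs with rfl | hs
          · exact hiWB
          · exact hmemB s hs
        have hcard' : (insert ({i} : Finset (Fin n)) B).card ≤ 2 ^ kB :=
          lemA n kB WB _ le_rfl
            (fun s hs t ht => Submodule.sub_mem _ (hS' s hs) (hS' t ht))
        rw [Finset.card_insert_of_notMem hnotB] at hcard'
        omega
      have hfin := hcross a0 ha0 {i} hiB
      rw [Finset.card_singleton, mul_one] at hfin
      by_cases h1 : (A.filter (fun a => i ∈ a)).Nonempty
      · have h2 := hcase h1
        rw [Finset.filter_eq_empty_iff] at h2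
        have hia0 := h2 ha0
        push_neg at hia0
        have : a0 ∩ {i} = {i} := by
          ext j
          simp only [Finset.mem_inter, Finset.mem_singleton]
          constructor
          · rintro ⟨_, hj⟩; exact hj
          · rintro rfl; exact ⟨hia0, rfl⟩
        rw [this, Finset.card_singleton] at hfin
        omega
      · rw [Finset.not_nonempty_iff_eq_empty, Finset.filter_eq_empty_iff] at h1
        have hia0 := h1 ha0
        have : a0 ∩ {i} = ∅ := by
          ext j
          simp only [Finset.mem_inter, Finset.mem_singleton, Finset.notMem_empty, iff_false,
            not_and]
          rintro hj rfl
          exact hia0 hj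
        rw [this, Finset.card_empty, Nat.mul_zero] at hfin
        omega
  refine ⟨?_, hBempty⟩
  -- B = {∅}, so A.card = 2^n and A = univ
  have hBsub : B ⊆ {∅} := by
    intro b hb
    rw [Finset.mem_singleton]
    exact hBempty b hb
  have hB1 : B.card = 1 := by
    have h1 : B.card ≤ 1 := le_trans (Finset.card_le_card hBsub) (by simp)
    omega
  have hA2 : A.card = 2 ^ n := by rw [hB1, mul_one] at hmax; exact hmax
  apply Finset.eq_univ_of_card
  rw [hA2, Fintype.card_finset, Fintype.card_fin]
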